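/- For every r ≥ 1, the r-th Bell number B_r equals the determinant of the r×r matrix whose (i,j) entry is the binomial coefficient C(j-1, i-1) for i ≤ j, is -1 for i = j+1, and 0 otherwise. -/

import Mathlib

open Matrix Finset

private def e (i j : ℕ) : ℤ :=
  if i ≤ j then (Nat.choose j i : ℤ) else if i = j + 1 then -1 else 0

private def M (n : ℕ) : Matrix (Fin n) (Fin n) ℤ :=
  Matrix.of fun i j => e i j

private lemma succAbove_val {n : ℕ} (p : Fin (n + 1)) (k : Fin n) :
    ((p.succAbove k : Fin (n + 1)) : ℕ) = if (k : ℕ) < (p : ℕ) then (k : ℕ) else k + 1 := by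
  rw [Fin.succAbove]
  split_ifs with h h' h' <;> simp_all [Fin.lt_def]

private lemma minor_det (n : ℕ) (i : Fin (n + 1)) :
    ((M (n + 1)).submatrix i.succAbove Fin.castSucc).det
      = (-1) ^ (n - (i : ℕ)) * (M (i : ℕ)).det := by
  induction n with
  | zero =>
      have h0 : i = 0 := Fin.ext (by omega)
      subst h0
      simp [Matrix.det_fin_zero]
  | succ m ih =>
      by_cases hi : i = Fin.last (m + 1)
      · subst hi
        have hM : (M (m + 2)).submatrix (Fin.last (m + 1)).succAbove Fin.castSucc
            = M (m + 1) := by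
          ext a b
          simp [M, Fin.succAbove_last]
        rw [hM]
        simp
      · have hlt : (i : ℕ) < m + 1 := by
          have := i.isLt
          have : (i : ℕ) ≠ m + 1 := fun h => hi (Fin.ext h)
          omega
        set N := (M (m + 2)).submatrix i.succAbove Fin.castSucc with hN
        rw [Matrix.det_succ_row N (Fin.last m)]
        have hrow : ∀ j : Fin (m + 1), j ≠ Fin.last m → N (Fin.last m) j = 0 := by
          intro j hj
          have hjv : (j : ℕ) < m := by
            have := j.isLt
            have : (j : ℕ) ≠ m := fun h => hj (Fin.ext h)
            omega
          show e _ _ = 0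
          rw [succAbove_val]
          simp only [Fin.val_last, Fin.coe_castSucc]
          rw [if_neg (by omega)]
          unfold e
          rw [if_neg (by omega), if_neg (by omega)]
        rw [Finset.sum_eq_single (Fin.last m)]
        · have hent : N (Fin.last m) (Fin.last m) = -1 := by
            show e _ _ = -1
            rw [succAbove_val]
            simp only [Fin.val_last, Fin.coe_castSucc]
            rw [if_neg (by omega)]
            unfold e
            rw [if_neg (by omega), if_pos (by omega)]
          have hmin : N.submatrix (Fin.last m).succAbove (Fin.last m).succAbove
              = (M (m + 1)).submatrix (⟨(i : ℕ), hlt⟩ : Fin (m + 1)).succAbove Fin.castSucc := by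
            ext a b
            show e _ _ = e _ _
            simp only [Fin.succAbove_last]
            congr 1
            rw [succAbove_val, succAbove_val]
            simp only [Fin.coe_castSucc]
          rw [hent, hmin, ih ⟨(i : ℕ), hlt⟩]
          simp only [Fin.val_last]
          have h2 : (-1 : ℤ) ^ (m + m) = 1 := by
            exact Even.neg_one_pow ⟨m, rfl⟩
          have h3 : (m + 1) - (i : ℕ) = (m - (i : ℕ)) + 1 := by omega
          rw [h3]
          rw [pow_succ]
          rw [show m + (m:ℕ) = m * 2 by omega] at h2
          ring_nf
          rw [h2]
          ring
        · intro j _ hj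
          rw [hrow j hj]; ring
        · intro h; exact absurd (Finset.mem_univ _) h

private lemma detM (B : ℕ → ℕ) (hB0 : B 0 = 1)
    (hBrec : ∀ r : ℕ, 1 ≤ r → B r = ∑ i ∈ Finset.range r, Nat.choose (r - 1) i * B i) :
    ∀ n : ℕ, (M n).det = (B n : ℤ) := by
  intro n
  induction n using Nat.strong_induction_on with
  | _ n ih =>
    match n with
    | 0 => simp [M, hB0]
    | Nat.succ n =>
      rw [Matrix.det_succ_column (M (n + 1)) (Fin.last n)]
      have hterm : ∀ i : Fin (n + 1),
          (-1 : ℤ) ^ ((i : ℕ) + (Fin.last n : ℕ)) * (M (n + 1)) i (Fin.last n)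
            * ((M (n + 1)).submatrix i.succAbove (Fin.last n).succAbove).det
          = (Nat.choose n i * B i : ℕ) := by
        intro i
        have hc : (Fin.last n).succAbove = (Fin.castSucc : Fin n → Fin (n + 1)) :=
          Fin.succAbove_last
        rw [hc, minor_det n i, ih i (by omega)]
        have hent : (M (n + 1)) i (Fin.last n) = (Nat.choose n i : ℤ) := by
          show e _ _ = _
          unfold e
          rw [if_pos (by simpa using Nat.le_of_lt_succ i.isLt)]
          simp
        rw [hent]
        simp only [Fin.val_last]
        rw [mul_comm ((-1:ℤ)^((i:ℕ)+n)) _, mul_assoc, ← mul_assoc ((-1:ℤ)^((i:ℕ)+n)),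
          ← pow_add]
        have : (i : ℕ) + n + (n - i) = 2 * n := by have := i.isLt; omega
        rw [this]
        simp [pow_mul]
      rw [Finset.sum_congr rfl (fun i _ => hterm i)]
      rw [hBrec (n + 1) (by omega)]
      push_cast
      rw [Fin.sum_univ_eq_sum_range (fun i => ((Nat.choose n i : ℤ) * (B i : ℤ)))]

theorem bell_hessenberg_det (B : ℕ → ℕ) (hB0 : B 0 = 1)
    (hBrec : ∀ r : ℕ, 1 ≤ r → B r = ∑ i ∈ Finset.range r, Nat.choose (r - 1) i * B i)
    (r : ℕ) (hr : 1 ≤ r) :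
    (B r : ℤ) = Matrix.det (Matrix.of fun i j : Fin r =>
      if (i : ℕ) ≤ (j : ℕ) then (Nat.choose (j : ℕ) (i : ℕ) : ℤ)
      else if (i : ℕ) = (j : ℕ) + 1 then -1 else 0) := by
  exact (detM B hB0 hBrec r).symm
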